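/- arXiv:1302.3494 — 2 statements merged into one kernel-verified Lean document; each statement's English description precedes it below -/
import Mathlib

section
/- Let r, d ≥ 1 and let x_1,...,x_r and p_1,...,p_r be integers in {0,...,d-1}. Then (x_1,...,x_r) ≠ (p_1,...,p_r) if and only if there exist s_1,...,s_r ∈ {0,...,d-1} and t_1,...,t_r ∈ {0,1} such that x_i = p_i + s_i - d·t_i for all i, and Σ_i s_i ≥ 1. -/
theorem stmt_11 (r : ℕ) (hr : 1 ≤ r) (d : ℤ) (hd : 1 ≤ d)
    (x p : Fin r → ℤ)
    (hx : ∀ i, 0 ≤ x i ∧ x i ≤ d - 1) (hp : ∀ i, 0 ≤ p i ∧ p i ≤ d - 1) :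
    x ≠ p ↔ ∃ s t : Fin r → ℤ,
      (∀ i, 0 ≤ s i ∧ s i ≤ d - 1) ∧ (∀ i, t i = 0 ∨ t i = 1) ∧
      (∀ i, x i = p i + s i - d * t i) ∧ 1 ≤ ∑ i, s i := by
  constructor
  · intro hne
    obtain ⟨j, hj⟩ : ∃ j, x j ≠ p j := by
      by_contra h
      push_neg at h
      exact hne (funext h)
    refine ⟨fun i => if p i ≤ x i then x i - p i else x i - p i + d,
           fun i => if p i ≤ x i then 0 else 1, ?_, ?_, ?_, ?_⟩
    · intro i
      obtain ⟨hx0, hx1⟩ := hx i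
      obtain ⟨hp0, hp1⟩ := hp i
      by_cases h : p i ≤ x i <;> simp [h] <;> omega
    · intro i; by_cases h : p i ≤ x i <;> simp [h]
    · intro i; by_cases h : p i ≤ x i <;> simp [h] <;> ring
    · have hpos : ∀ i, (0:ℤ) ≤ if p i ≤ x i then x i - p i else x i - p i + d := by
        intro i
        obtain ⟨hx0, hx1⟩ := hx i
        obtain ⟨hp0, hp1⟩ := hp i
        by_cases h : p i ≤ x i <;> simp [h] <;> omega
      have hj1 : (1:ℤ) ≤ if p j ≤ x j then x j - p j else x j - p j + d := by
        obtain ⟨hx0, hx1⟩ := hx j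
        obtain ⟨hp0, hp1⟩ := hp j
        by_cases h : p j ≤ x j <;> simp [h] <;> omega
      calc (1:ℤ) ≤ _ := hj1
        _ ≤ _ := Finset.single_le_sum (fun i _ => hpos i) (Finset.mem_univ j)
  · rintro ⟨s, t, hs, ht, heq, hsum⟩ hxp
    subst hxp
    have hz : ∀ i, s i = 0 := by
      intro i
      have h2 := heq i
      obtain ⟨h0, h1⟩ := hs i
      rcases ht i with h | h <;> rw [h] at h2 <;> omega
    simp [hz] at hsum
end

section
/- Let ℓ ≥ 1, t = 2^ℓ, s ∈ {0,...,t-1}, and let s_0,...,s_{ℓ-1} ∈ {0,1} satisfy s = Σ_{i<ℓ} 2^i s_i. Suppose integers s_ij ∈ {0,1} (for i,j < ℓ) and r satisfy 2·s_ij = s_i + s_j - d_ij for some d_ij ∈ {0,1}, and r = Σ_{i<ℓ} Σ_{j<ℓ} 2^{i+j}·s_ij. Then r = s². -/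
theorem stmt_13 (ℓ : ℕ) (hℓ : 1 ≤ ℓ) (s : ℤ) (hs0 : 0 ≤ s) (hs : s < 2 ^ ℓ)
    (sd : ℕ → ℤ) (hbit : ∀ i < ℓ, sd i = 0 ∨ sd i = 1)
    (hexp : s = ∑ i ∈ Finset.range ℓ, 2 ^ i * sd i)
    (sij dij : ℕ → ℕ → ℤ)
    (hsij : ∀ i < ℓ, ∀ j < ℓ, sij i j = 0 ∨ sij i j = 1)
    (hdij : ∀ i < ℓ, ∀ j < ℓ, dij i j = 0 ∨ dij i j = 1)
    (hmul : ∀ i < ℓ, ∀ j < ℓ, 2 * sij i j = sd i + sd j - dij i j)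
    (r : ℤ)
    (hrdef : r = ∑ i ∈ Finset.range ℓ, ∑ j ∈ Finset.range ℓ, 2 ^ (i + j) * sij i j) :
    r = s ^ 2 := by
  have key : ∀ i ∈ Finset.range ℓ, ∀ j ∈ Finset.range ℓ, sij i j = sd i * sd j := by
    intro i hi j hj
    rw [Finset.mem_range] at hi hj
    rcases hbit i hi with h1 | h1 <;> rcases hbit j hj with h2 | h2 <;>
      rcases hsij i hi j hj with h3 | h3 <;> rcases hdij i hi j hj with h4 | h4 <;>
      have := hmul i hi j hj <;> rw [h1, h2, h3, h4] at * <;> omega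
  rw [hrdef, hexp, sq, Finset.sum_mul_sum]
  apply Finset.sum_congr rfl
  intro i hi
  apply Finset.sum_congr rfl
  intro j hj
  rw [key i hi j hj, pow_add]
  ring
end
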